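/- For b with 0 ≤ b < 1, the series Σ_{l≥1} (1/(l(l+1))) · (1 − b^l(1 + (1−b)l)) converges and equals 1 − b. -/
import Mathlib

/-- For `0 ≤ b < 1`, the series `Σ_{l ≥ 1} (1/(l(l+1))) (1 - b^l (1 + (1-b) l))`
converges and equals `1 - b`. -/
theorem series_eq_one_sub (b : ℝ) (hb0 : 0 ≤ b) (hb1 : b < 1) :
    HasSum (fun l : ℕ =>
      (1 / (((l + 1 : ℕ) : ℝ) * ((l + 2 : ℕ) : ℝ))) *
        (1 - b ^ (l + 1) * (1 + (1 - b) * ((l + 1 : ℕ) : ℝ))))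
      (1 - b) := by
  set a : ℕ → ℝ := fun l =>
    (1 / (((l + 1 : ℕ) : ℝ) * ((l + 2 : ℕ) : ℝ))) *
      (1 - b ^ (l + 1) * (1 + (1 - b) * ((l + 1 : ℕ) : ℝ))) with ha
  set f : ℕ → ℝ := fun n => (1 - b ^ (n + 1)) / ((n : ℝ) + 1) with hf
  -- key bound
  have key : ∀ n : ℕ, b ^ n * (1 + (1 - b) * n) ≤ 1 := by
    intro n
    induction n with
    | zero => simp
    | succ n ih =>
      have hbpow : b ^ (n + 1) ≤ 1 := pow_le_one₀ hb0 hb1.le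
      have h1 : b ^ (n + 1) * (1 + (1 - b) * (n + 1 : ℕ))
          = b * (b ^ n * (1 + (1 - b) * n)) + (1 - b) * b ^ (n + 1) := by
        push_cast; ring
      rw [h1]
      have h2 : b * (b ^ n * (1 + (1 - b) * n)) ≤ b * 1 := by
        apply mul_le_mul_of_nonneg_left ih hb0
      have h3 : (1 - b) * b ^ (n + 1) ≤ (1 - b) * 1 := by
        apply mul_le_mul_of_nonneg_left hbpow (by linarith)
      linarith
  have hnonneg : ∀ l, 0 ≤ a l := by
    intro l
    apply mul_nonneg
    · positivity
    · have := key (l + 1); push_cast at this ⊢; linarith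
  have htel : ∀ l, a l = f l - f (l + 1) := by
    intro l
    have h1 : ((l : ℝ) + 1) ≠ 0 := by positivity
    have h2 : ((l : ℝ) + 2) ≠ 0 := by positivity
    simp only [ha, hf]
    push_cast
    field_simp
    ring
  rw [hasSum_iff_tendsto_nat_of_nonneg hnonneg]
  have hsum : ∀ n, ∑ i ∈ Finset.range n, a i = f 0 - f n := by
    intro n
    simp only [htel]
    exact Finset.sum_range_sub' f n
  simp only [hsum]
  have hf0 : f 0 = 1 - b := by simp [hf]
  rw [hf0]
  have : Filter.Tendsto f Filter.atTop (nhds 0) := by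
    have h1 : Filter.Tendsto (fun n : ℕ => (1 - b ^ (n + 1))) Filter.atTop (nhds 1) := by
      have := (tendsto_pow_atTop_nhds_zero_of_lt_one hb0 hb1).comp
        (Filter.tendsto_add_atTop_nat 1)
      simpa using (tendsto_const_nhds.sub this)
    have h2 : Filter.Tendsto (fun n : ℕ => 1 / ((n : ℝ) + 1)) Filter.atTop (nhds 0) :=
      tendsto_one_div_add_atTop_nhds_zero_nat
    have := h1.mul h2
    simpa [hf, div_eq_mul_inv, mul_comm] using this
  simpa using tendsto_const_nhds.sub this
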